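/- Let a Mauldin–Williams graph have invariant list (K_v)_{v∈V} with invariant set K, and assume K has no isolated points. Then for every continuous function a₀ : K → ℝ with a₀ ≥ 0 and a₀ not identically 0, every integer n ≥ 1, and every ε > 0, there exists a continuous function x : K → [0,1] such that: (i) x vanishes on the zero set of a₀; (ii) sup_{t∈K} x(t) = 1; (iii) sup_{t∈K} x(t)²·a₀(t) > (sup_{t∈K} a₀(t)) − ε; and (iv) x(φ_α(t))·x(t) = 0 for every path α of length k with 1 ≤ k ≤ n and every t ∈ K_{r(α_k)}. (This verifies the Muhly–Solel aperiodicity criterion for the C*-correspondence associated with the Mauldin–Williams graph.) -/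

import Mathlib

/-- A finite directed graph with surjective range and source maps
(no sources and no sinks). -/
structure DirGraph (V E : Type*) where
  r : E → V
  s : E → V
  r_surj : Function.Surjective r
  s_surj : Function.Surjective s

/-- A Mauldin–Williams graph over the directed graph `G`.  The compact metric
spaces `T v` are realized as pairwise disjoint nonempty compact subsets of an
ambient metric space `X` (modelling their disjoint union), and for each edge
`e` the map `φ e : T (r e) → T (s e)` satisfies
`c₁ * dist x y ≤ dist (φ e x) (φ e y) ≤ c * dist x y` with `0 < c₁ ≤ c < 1`. -/
structure MWGraph {V E : Type*} (G : DirGraph V E) (X : Type*) [MetricSpace X] where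
  T : V → Set X
  φ : E → X → X
  c₁ : ℝ
  c : ℝ
  c₁_pos : 0 < c₁
  c₁_le_c : c₁ ≤ c
  c_lt_one : c < 1
  T_compact : ∀ v, IsCompact (T v)
  T_nonempty : ∀ v, (T v).Nonempty
  T_disjoint : ∀ v w, v ≠ w → Disjoint (T v) (T w)
  maps_to : ∀ e, Set.MapsTo (φ e) (T (G.r e)) (T (G.s e))
  lower : ∀ e, ∀ x ∈ T (G.r e), ∀ y ∈ T (G.r e), c₁ * dist x y ≤ dist (φ e x) (φ e y)
  upper : ∀ e, ∀ x ∈ T (G.r e), ∀ y ∈ T (G.r e), dist (φ e x) (φ e y) ≤ c * dist x y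

namespace MWGraph

variable {V E : Type*} {G : DirGraph V E} {X : Type*} [MetricSpace X]

/-- `K : V → Set X` is an invariant list for the Mauldin–Williams graph `M`:
a family of nonempty compact sets `K v ⊆ T v` with
`K v = ⋃_{e ∈ E, s e = v} φ e '' K (r e)` for every vertex `v`. -/
def IsInvariantList (M : MWGraph G X) (K : V → Set X) : Prop :=
  (∀ v, K v ⊆ M.T v) ∧ (∀ v, IsCompact (K v)) ∧ (∀ v, (K v).Nonempty) ∧
    (∀ v, K v = ⋃ e ∈ {e : E | G.s e = v}, M.φ e '' K (G.r e))

/-- The Mauldin–Williams graph coincides with its own invariant list,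
i.e. `(T v)_{v ∈ V}` is itself the invariant list. -/
def SelfInvariant (M : MWGraph G X) : Prop :=
  ∀ v, M.T v = ⋃ e ∈ {e : E | G.s e = v}, M.φ e '' M.T (G.r e)

/-- The invariant set: the (disjoint) union of the sets of the family. -/
def KK (M : MWGraph G X) : Set X := ⋃ v, M.T v

/-- A Mauldin–Williams graph is totally disconnected if
`φ e '' K (r e)` and `φ g '' K (r g)` are disjoint whenever `e ≠ g`, `s e = s g`. -/
def TotallyDisconnected (M : MWGraph G X) : Prop :=
  ∀ e g : E, e ≠ g → G.s e = G.s g →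
    Disjoint (M.φ e '' M.T (G.r e)) (M.φ g '' M.T (G.r g))

end MWGraph
namespace MWGraph

variable {V E : Type*} {G : DirGraph V E} {X : Type*} [MetricSpace X]

/-- For a finite path `l = [α₁, …, α_k]` (a list of edges), the composition
`φ_{α₁} ∘ ⋯ ∘ φ_{α_k}` applied to a point. -/
def pathMap (M : MWGraph G X) : List E → X → X
  | [], t => t
  | e :: l, t => M.φ e (pathMap M l t)

/-- `l = [α₁, …, α_k]` is a path in `G`: `r αᵢ = s αᵢ₊₁` for consecutive edges. -/
def IsPath (G : DirGraph V E) (l : List E) : Prop :=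
  l.Chain' fun a b => G.r a = G.s b

end MWGraph

/-- Helper: a positive lower bound for a positive function on a finite set. -/
private lemma exists_pos_forall_le {α : Type*} {s : Set α} (hs : s.Finite) (f : α → ℝ)
    (hf : ∀ a ∈ s, 0 < f a) : ∃ δ > 0, ∀ a ∈ s, δ ≤ f a := by
  rcases s.eq_empty_or_nonempty with rfl | ⟨a0, ha0⟩
  · exact ⟨1, one_pos, by simp⟩
  · have hne : hs.toFinset.Nonempty := ⟨a0, hs.mem_toFinset.2 ha0⟩
    refine ⟨hs.toFinset.inf' hne f, ?_, fun a ha => Finset.inf'_le f (hs.mem_toFinset.2 ha)⟩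
    rw [gt_iff_lt, Finset.lt_inf'_iff]
    exact fun a ha => hf a (hs.mem_toFinset.1 ha)

/-- Helper: a path map sends `T (r (last))` into `T (s (head))` and is a strict
contraction with ratio `c`. -/
private lemma MWGraph.pathMap_lemma {V E : Type*} {G : DirGraph V E} {X : Type*}
    [MetricSpace X] (M : MWGraph G X) :
    ∀ (l : List E) (hl : l ≠ []), MWGraph.IsPath G l →
      ∀ x ∈ M.T (G.r (l.getLast hl)), ∀ y ∈ M.T (G.r (l.getLast hl)),
        M.pathMap l x ∈ M.T (G.s (l.head hl)) ∧
          dist (M.pathMap l x) (M.pathMap l y) ≤ M.c * dist x y := by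
  have hc0 : 0 ≤ M.c := le_trans M.c₁_pos.le M.c₁_le_c
  intro l
  induction l with
  | nil => intro hl; exact absurd rfl hl
  | cons e l ih =>
    intro hl hp x hx y hy
    cases l with
    | nil =>
      simp only [List.getLast_singleton] at hx hy
      simp only [MWGraph.pathMap, List.head_cons]
      exact ⟨M.maps_to e hx, M.upper e x hx y hy⟩
    | cons e' l' =>
      have hl' : e' :: l' ≠ [] := by simp
      have hgl : (e :: e' :: l').getLast hl = (e' :: l').getLast hl' :=
        List.getLast_cons hl'
      simp only [MWGraph.IsPath, List.Chain', List.isChain_cons_cons] at hp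
      rw [hgl] at hx hy
      obtain ⟨hmemx, hdist⟩ := ih hl' hp.2 x hx y hy
      obtain ⟨hmemy, -⟩ := ih hl' hp.2 y hy x hx
      rw [List.head_cons] at hmemx hmemy
      have hmemx' : M.pathMap (e' :: l') x ∈ M.T (G.r e) := by rw [hp.1]; exact hmemx
      have hmemy' : M.pathMap (e' :: l') y ∈ M.T (G.r e) := by rw [hp.1]; exact hmemy
      constructor
      · exact M.maps_to e hmemx'
      · show dist (M.φ e (M.pathMap (e' :: l') x)) (M.φ e (M.pathMap (e' :: l') y)) ≤
            M.c * dist x y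
        have h1 := M.upper e _ hmemx' _ hmemy'
        have h2 : 0 ≤ dist x y := dist_nonneg
        nlinarith [M.c_lt_one, mul_le_mul_of_nonneg_left hdist hc0, mul_nonneg hc0 h2]

/-- (Muhly–Solel aperiodicity criterion for the correspondence of a
Mauldin–Williams graph.)  Let `(K v)` be the invariant list, with invariant set
`K = ⋃ v, K v` having no isolated points.  For every continuous `a₀ : K → ℝ` with
`a₀ ≥ 0`, `a₀` not identically `0`, every `n ≥ 1` and every `ε > 0` there is a
continuous `x : K → [0,1]` vanishing on the zero set of `a₀`, with
`sup x = 1`, `sup (x² · a₀) > sup a₀ - ε`, and `x (φ_α t) * x t = 0` for every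
path `α` of length `1 ≤ k ≤ n` and every `t ∈ K (r α_k)`. -/
theorem MWGraph.aperiodicity_criterion {V E : Type*} [Fintype V] [Fintype E]
    {G : DirGraph V E} {X : Type*} [MetricSpace X] (M : MWGraph G X)
    (K : V → Set X) (hK : M.IsInvariantList K)
    (hnoiso : ∀ v, ∀ x ∈ K v, ∀ ε > 0, ∃ y ∈ K v, y ≠ x ∧ dist y x < ε)
    (a₀ : X → ℝ) (ha₀cont : ContinuousOn a₀ (⋃ v, K v))
    (ha₀nonneg : ∀ t ∈ ⋃ v, K v, 0 ≤ a₀ t)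
    (ha₀ne : ∃ t ∈ ⋃ v, K v, a₀ t ≠ 0)
    (n : ℕ) (hn : 1 ≤ n) (ε : ℝ) (hε : 0 < ε) :
    ∃ x : X → ℝ,
      ContinuousOn x (⋃ v, K v) ∧
      (∀ t ∈ ⋃ v, K v, x t ∈ Set.Icc (0 : ℝ) 1) ∧
      (∀ t ∈ ⋃ v, K v, a₀ t = 0 → x t = 0) ∧
      sSup (x '' (⋃ v, K v)) = 1 ∧
      sSup ((fun t => (x t) ^ 2 * a₀ t) '' (⋃ v, K v)) > sSup (a₀ '' (⋃ v, K v)) - ε ∧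
      ∀ (l : List E) (hl : l ≠ []), l.length ≤ n → MWGraph.IsPath G l →
        ∀ t ∈ K (G.r (l.getLast hl)), x (M.pathMap l t) * x t = 0 := by
  classical
  obtain ⟨hKsub, hKcomp, hKne, -⟩ := hK
  set KK : Set X := ⋃ v, K v with hKKdef
  have hKKcomp : IsCompact KK := isCompact_iUnion hKcomp
  have hKKne : KK.Nonempty := by obtain ⟨t, ht, -⟩ := ha₀ne; exact ⟨t, ht⟩
  -- maximum point of a₀
  obtain ⟨t₀, ht₀, ht₀max⟩ := hKKcomp.exists_isMaxOn hKKne ha₀cont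
  set m : ℝ := sSup (a₀ '' KK) with hm
  have him_ne : (a₀ '' KK).Nonempty := hKKne.image _
  have him_bdd : BddAbove (a₀ '' KK) := ⟨a₀ t₀, by rintro - ⟨t, ht, rfl⟩; exact ht₀max ht⟩
  have hmt₀ : m = a₀ t₀ :=
    le_antisymm (csSup_le him_ne (by rintro - ⟨t, ht, rfl⟩; exact ht₀max ht))
      (le_csSup him_bdd ⟨t₀, ht₀, rfl⟩)
  have hmpos : 0 < m := by
    obtain ⟨t, ht, hta⟩ := ha₀ne
    have h1 : 0 ≤ a₀ t := ha₀nonneg t ht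
    have h2 : a₀ t ≤ a₀ t₀ := ht₀max ht
    rw [hmt₀]
    rcases h1.lt_or_eq with h | h
    · linarith
    · exact absurd h.symm hta
  set θ : ℝ := m - min ε m / 2 with hθ
  have hθpos : 0 < θ := by
    have := min_le_right ε m; simp only [hθ]; linarith
  have hθlt : θ < m := by
    have h1 : 0 < min ε m := lt_min hε hmpos; simp only [hθ]; linarith
  have hθgt : m - ε < θ := by
    have := min_le_left ε m; simp only [hθ]; linarith
  -- neighborhood of t₀ where a₀ > θ
  have hcw : ContinuousWithinAt a₀ KK t₀ := ha₀cont t₀ ht₀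
  have hev : a₀ ⁻¹' Set.Ioi θ ∈ nhdsWithin t₀ KK :=
    hcw.preimage_mem_nhdsWithin (Ioi_mem_nhds (by rw [← hmt₀]; exact hθlt))
  rw [Metric.mem_nhdsWithin_iff] at hev
  obtain ⟨η, hη, hball⟩ := hev
  -- vertex of t₀
  rcases Set.mem_iUnion.1 ht₀ with ⟨v₀, ht₀v⟩
  -- the finite set of fixed points of path maps
  set F : Set X := {z | ∃ (l : List E) (hl : l ≠ []), l.length ≤ n ∧ MWGraph.IsPath G l ∧
      z ∈ K (G.r (l.getLast hl)) ∧ M.pathMap l z = z} with hF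
  have hFfin : F.Finite := by
    have hsub : F ⊆ ⋃ l ∈ {l : List E | l.length ≤ n},
        {z | ∃ (hl : l ≠ []), MWGraph.IsPath G l ∧ z ∈ K (G.r (l.getLast hl)) ∧
          M.pathMap l z = z} := by
      rintro z ⟨l, hl, hlen, hp, hz, hfix⟩
      exact Set.mem_biUnion hlen ⟨hl, hp, hz, hfix⟩
    refine Set.Finite.subset (Set.Finite.biUnion (List.finite_length_le E n) ?_) hsub
    intro l _
    apply Set.Subsingleton.finite
    rintro z ⟨hl, hp, hz, hfz⟩ w ⟨hl2, hp2, hw, hfw⟩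
    have h1 := (M.pathMap_lemma l hl hp z (hKsub _ hz) w (hKsub _ hw)).2
    rw [hfz, hfw] at h1
    have h2 : dist z w ≤ 0 := by nlinarith [M.c_lt_one, dist_nonneg (x := z) (y := w)]
    exact dist_le_zero.mp h2
  -- choose t₁ near t₀, avoiding F
  have hFdfin : (F \ {t₀}).Finite := hFfin.subset Set.diff_subset
  obtain ⟨d, hdpos, hdle⟩ := exists_pos_forall_le hFdfin (fun z => dist z t₀)
    (fun z hz => dist_pos.2 (by simpa using hz.2))
  obtain ⟨t₁, ht₁v, ht₁ne, ht₁d⟩ := hnoiso v₀ t₀ ht₀v (min η d) (lt_min hη hdpos)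
  have ht₁F : t₁ ∉ F := by
    intro h
    have h1 := hdle t₁ ⟨h, by simpa using ht₁ne⟩
    have h2 : dist t₁ t₀ < d := lt_of_lt_of_le ht₁d (min_le_right _ _)
    linarith
  have ht₁KK : t₁ ∈ KK := Set.mem_iUnion.2 ⟨v₀, ht₁v⟩
  have ht₁θ : θ < a₀ t₁ :=
    hball ⟨Metric.mem_ball.2 (lt_of_lt_of_le ht₁d (min_le_left _ _)), ht₁KK⟩
  -- radius where a₀ > 0 near t₁
  have hcw1 : ContinuousWithinAt a₀ KK t₁ := ha₀cont t₁ ht₁KK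
  have hev1 : a₀ ⁻¹' Set.Ioi 0 ∈ nhdsWithin t₁ KK :=
    hcw1.preimage_mem_nhdsWithin (Ioi_mem_nhds (lt_trans hθpos ht₁θ))
  rw [Metric.mem_nhdsWithin_iff] at hev1
  obtain ⟨ρ, hρ, hρball⟩ := hev1
  -- distance from t₁ to the other K v's
  obtain ⟨δ₁, hδ₁, hδ₁le⟩ := exists_pos_forall_le (Set.finite_univ (α := V))
    (fun v => if v = v₀ then 1 else Metric.infDist t₁ (K v)) (by
      intro v _
      by_cases h : v = v₀
      · simp [h]
      · simp only [if_neg h]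
        refine ((hKcomp v).isClosed.notMem_iff_infDist_pos (hKne v)).1 ?_
        intro hmem
        exact Set.disjoint_left.1 (M.T_disjoint v v₀ h) (hKsub v hmem) (hKsub v₀ ht₁v))
  -- distance from t₁ to its images under path maps
  obtain ⟨δ₂, hδ₂, hδ₂le⟩ := exists_pos_forall_le (List.finite_length_le E n)
    (fun l => if h : ∃ (hl : l ≠ []), MWGraph.IsPath G l ∧ G.r (l.getLast hl) = v₀ then
        dist (M.pathMap l t₁) t₁ / 2 else 1) (by
      intro l hlen
      beta_reduce
      by_cases h : ∃ (hl : l ≠ []), MWGraph.IsPath G l ∧ G.r (l.getLast hl) = v₀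
      · obtain ⟨hl, hp, hr⟩ := h
        rw [dif_pos ⟨hl, hp, hr⟩]
        refine div_pos (dist_pos.2 ?_) two_pos
        intro heq
        exact ht₁F ⟨l, hl, hlen, hp, by rw [hr]; exact ht₁v, heq⟩
      · rw [dif_neg h]; exact one_pos)
  set δ : ℝ := min (min δ₁ δ₂) ρ with hδdef
  have hδpos : 0 < δ := lt_min (lt_min hδ₁ hδ₂) hρ
  set x : X → ℝ := fun t => max 0 (1 - dist t t₁ / δ) with hxdef
  have hxcont : Continuous x :=
    continuous_const.max (continuous_const.sub ((continuous_id.dist continuous_const).div_const δ))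
  have hxmem : ∀ t, x t ∈ Set.Icc (0 : ℝ) 1 := by
    intro t
    refine ⟨le_max_left _ _, max_le zero_le_one ?_⟩
    have : 0 ≤ dist t t₁ / δ := div_nonneg dist_nonneg hδpos.le
    linarith
  have hsupp : ∀ t, x t ≠ 0 → dist t t₁ < δ := by
    intro t hxt
    by_contra hge
    push_neg at hge
    have h1 : 1 - dist t t₁ / δ ≤ 0 := by
      have : 1 ≤ dist t t₁ / δ := (one_le_div hδpos).2 hge
      linarith
    exact hxt (max_eq_left h1)
  have hx1 : x t₁ = 1 := by
    simp only [hxdef, dist_self, zero_div, sub_zero]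
    exact max_eq_right zero_le_one
  refine ⟨x, hxcont.continuousOn, fun t _ => hxmem t, ?_, ?_, ?_, ?_⟩
  -- vanishing on the zero set of a₀
  · intro t ht ha
    by_contra hx
    have h1 : dist t t₁ < ρ := lt_of_lt_of_le (hsupp t hx) (min_le_right _ _)
    have h2 : a₀ t ∈ Set.Ioi (0 : ℝ) := hρball ⟨Metric.mem_ball.2 h1, ht⟩
    rw [ha] at h2
    exact lt_irrefl 0 (Set.mem_Ioi.1 h2)
  -- sup x = 1
  · apply le_antisymm
    · exact csSup_le (hKKne.image _) (by rintro - ⟨t, -, rfl⟩; exact (hxmem t).2)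
    · exact le_csSup ⟨1, by rintro - ⟨t, -, rfl⟩; exact (hxmem t).2⟩ ⟨t₁, ht₁KK, hx1⟩
  -- sup (x² a₀) > sup a₀ - ε
  · have hbdd : BddAbove ((fun t => x t ^ 2 * a₀ t) '' KK) :=
      hKKcomp.bddAbove_image (((hxcont.pow 2).continuousOn).mul ha₀cont)
    have hval : (fun t => x t ^ 2 * a₀ t) t₁ = a₀ t₁ := by
      simp only [hx1]; ring
    have h1 : a₀ t₁ ≤ sSup ((fun t => x t ^ 2 * a₀ t) '' KK) :=
      le_csSup hbdd ⟨t₁, ht₁KK, hval⟩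
    calc sSup (a₀ '' KK) - ε = m - ε := by rw [hm]
      _ < θ := hθgt
      _ < a₀ t₁ := ht₁θ
      _ ≤ _ := h1
  -- the aperiodicity condition
  · intro l hl hlen hp t ht
    by_contra hne0
    rcases mul_ne_zero_iff.1 hne0 with ⟨hxp, hxt⟩
    have hdt : dist t t₁ < δ := hsupp t hxt
    have hdp : dist (M.pathMap l t) t₁ < δ := hsupp _ hxp
    by_cases hv : G.r (l.getLast hl) = v₀
    · -- t₁ is in the same K as t; use the contraction estimate
      have ht₁mem : t₁ ∈ K (G.r (l.getLast hl)) := by rw [hv]; exact ht₁v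
      have hlip := (M.pathMap_lemma l hl hp t (hKsub _ ht) t₁ (hKsub _ ht₁mem)).2
      have hcd : dist (M.pathMap l t) (M.pathMap l t₁) < δ := by
        have hc0 : 0 ≤ M.c := le_trans M.c₁_pos.le M.c₁_le_c
        nlinarith [M.c_lt_one, dist_nonneg (x := t) (y := t₁)]
      have h2 : δ₂ ≤ dist (M.pathMap l t₁) t₁ / 2 := by
        have h3 := hδ₂le l hlen
        beta_reduce at h3
        rwa [dif_pos ⟨hl, hp, hv⟩] at h3
      have hδδ₂ : δ ≤ δ₂ := le_trans (min_le_left _ _) (min_le_right _ _)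
      have htri : dist (M.pathMap l t₁) t₁ ≤
          dist (M.pathMap l t₁) (M.pathMap l t) + dist (M.pathMap l t) t₁ := dist_triangle _ _ _
      rw [dist_comm (M.pathMap l t₁) (M.pathMap l t)] at htri
      linarith
    · -- t₁ is in a different K; contradiction with the distance to K v
      have h1 : δ₁ ≤ Metric.infDist t₁ (K (G.r (l.getLast hl))) := by
        have h3 := hδ₁le (G.r (l.getLast hl)) (Set.mem_univ _)
        beta_reduce at h3
        rwa [if_neg hv] at h3
      have h2 : Metric.infDist t₁ (K (G.r (l.getLast hl))) ≤ dist t₁ t :=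
        Metric.infDist_le_dist_of_mem ht
      have hδδ₁ : δ ≤ δ₁ := le_trans (min_le_left _ _) (min_le_left _ _)
      rw [dist_comm t₁ t] at h2
      linarith
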